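/- arXiv:1404.6994 — 4 statements merged into one kernel-verified Lean document; each statement's English description precedes it below -/
import Mathlib

section
/- Let k ≥ 1, let q_1,…,q_k be primes, let N ∈ ℝ^k with 0 ≤ N_i < q_i for each i, and let H, P be tuples of real numbers with 1 ≤ P_i ≤ H_i and H_i·P_i < q_i for each i. For m ∈ ℤ^k let A(m) denote the number of pairs (a,p) with p_i prime, P_i < p_i ≤ 2P_i, a_i an integer with 0 ≤ a_i < p_i, and (N_i − a_i q_i)/p_i − H_i/P_i < m_i ≤ (N_i − a_i q_i)/p_i for each i = 1,…,k. Then: (a) A(m) = 0 unless |m_i| ≤ 2q_i for all i; and (b) Σ_{m∈ℤ^k} A(m) ≤ Σ_{m∈ℤ^k} A(m)² ≤ C_k ‖H‖·‖P‖ for a constant C_k depending only on k, where ‖H‖ = H_1⋯H_k and ‖P‖ = P_1⋯P_k. -/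
open scoped BigOperators

/-- The counting function `A(m)`: the number of pairs `(a,p)` with each `p_i` prime in
`(P_i, 2P_i]`, `0 ≤ a_i < p_i`, and `(N_i − a_i q_i)/p_i − H_i/P_i < m_i ≤ (N_i − a_i q_i)/p_i`. -/
noncomputable def Acount {k : ℕ} (q : Fin k → ℕ) (N H P : Fin k → ℝ) (m : Fin k → ℤ) : ℕ :=
  Set.ncard {ap : (Fin k → ℤ) × (Fin k → ℕ) |
    ∀ i, (ap.2 i).Prime ∧ P i < (ap.2 i : ℝ) ∧ (ap.2 i : ℝ) ≤ 2 * P i ∧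
      0 ≤ ap.1 i ∧ ap.1 i < (ap.2 i : ℤ) ∧
      (N i - (ap.1 i : ℝ) * (q i : ℝ)) / (ap.2 i : ℝ) - H i / P i < (m i : ℝ) ∧
      (m i : ℝ) ≤ (N i - (ap.1 i : ℝ) * (q i : ℝ)) / (ap.2 i : ℝ)}


open Finset
open scoped Classical

namespace Stmt8aux

noncomputable def ctr (q : ℕ) (N : ℝ) (x : ℤ × ℕ) : ℝ := (N - (x.1 : ℝ) * q) / x.2

def scond (P : ℝ) (x : ℤ × ℕ) : Prop :=
  x.2.Prime ∧ P < (x.2 : ℝ) ∧ (x.2 : ℝ) ≤ 2 * P ∧ 0 ≤ x.1 ∧ x.1 < (x.2 : ℤ)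

def icond (q : ℕ) (N H P : ℝ) (n : ℤ) (x : ℤ × ℕ) : Prop :=
  ctr q N x - H / P < (n : ℝ) ∧ (n : ℝ) ≤ ctr q N x

noncomputable def D (P : ℝ) : Finset (ℤ × ℕ) :=
  ((Finset.Icc (0 : ℤ) ⌊2 * P⌋) ×ˢ (Finset.Icc 0 ⌊2 * P⌋₊)).filter (scond P)

noncomputable def F (q : ℕ) (N H P : ℝ) (n : ℤ) : Finset (ℤ × ℕ) :=
  (D P).filter (icond q N H P n)

lemma mem_F {q : ℕ} {N H P : ℝ} {n : ℤ} {x : ℤ × ℕ} :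
    x ∈ F q N H P n ↔ scond P x ∧ icond q N H P n x := by
  unfold F D
  simp only [mem_filter, mem_product, mem_Icc]
  constructor
  · rintro ⟨⟨-, h1⟩, h2⟩; exact ⟨h1, h2⟩
  rintro ⟨⟨hp, hP, h2P, ha0, hap⟩, hi⟩
  refine ⟨⟨⟨⟨ha0, ?_⟩, ?_, ?_⟩, ⟨hp, hP, h2P, ha0, hap⟩⟩, hi⟩
  · have hple : (x.2 : ℤ) ≤ ⌊2 * P⌋ := by
      exact_mod_cast Int.le_floor.2 (by exact_mod_cast h2P)
    omega
  · omega
  · exact Nat.le_floor (by exact_mod_cast h2P)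

section OneDim
variable {q : ℕ} {N H P : ℝ}

lemma supp (hq : q.Prime) (hN0 : 0 ≤ N) (hNq : N < q) (hP1 : 1 ≤ P) (hPH : P ≤ H)
    (hHP : H * P < q) {n : ℤ} (hn : (F q N H P n).Nonempty) : |n| ≤ 2 * (q : ℤ) := by
  obtain ⟨x, hx⟩ := hn
  rw [mem_F] at hx
  obtain ⟨⟨hp, hPp, h2P, ha0, hap⟩, hi1, hi2⟩ := hx
  have hq0 : (0:ℝ) < q := by exact_mod_cast hq.pos
  have hp0 : (0:ℝ) < (x.2 : ℝ) := by linarith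
  have haR : (0:ℝ) ≤ (x.1 : ℝ) := by exact_mod_cast ha0
  have hapR : (x.1 : ℝ) < (x.2 : ℝ) := by exact_mod_cast hap
  have hH0 : 0 < H := by linarith
  have hHPle : H / P ≤ H := div_le_self hH0.le hP1
  have hHq : H < q := by nlinarith
  have hctr_le : ctr q N x ≤ N := by
    rw [ctr, div_le_iff₀ hp0]; nlinarith
  have hctr_ge : -(q:ℝ) ≤ ctr q N x := by
    rw [ctr, le_div_iff₀ hp0]; nlinarith
  have h1 : (n:ℝ) < q := lt_of_le_of_lt (hi2.trans hctr_le) hNq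
  have h2 : -(2*(q:ℝ)) < n := by
    have := hi1; simp only [ctr] at this ⊢; nlinarith [hctr_ge]
  rw [abs_le]
  constructor
  · exact_mod_cast h2.le
  · have : n < (q:ℤ) := by exact_mod_cast h1
    omega

lemma interval_card {c L : ℝ} (hL : 1 ≤ L) (s : Finset ℤ)
    (p : ℤ → Prop) (himp : ∀ n, p n → c - L < (n:ℝ) ∧ (n:ℝ) ≤ c) :
    ((s.filter p).card : ℝ) ≤ 3 * L := by
  have hsub : s.filter p ⊆ Finset.Icc (⌊c⌋ - ⌈L⌉) ⌊c⌋ := by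
    intro n hn
    rw [mem_filter] at hn
    obtain ⟨h1, h2⟩ := himp n hn.2
    rw [mem_Icc]
    constructor
    · have : ((⌊c⌋ - ⌈L⌉ : ℤ) : ℝ) < n := by
        push_cast
        have := Int.floor_le c
        have := Int.le_ceil L
        linarith
      exact_mod_cast this.le
    · exact Int.le_floor.2 h2
  calc ((s.filter p).card : ℝ) ≤ ((Finset.Icc (⌊c⌋ - ⌈L⌉) ⌊c⌋).card : ℝ) := by
        exact_mod_cast Finset.card_le_card hsub
    _ = ((⌈L⌉ + 1 : ℤ) : ℝ) := by
        rw [Int.card_Icc]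
        have h0 : (0:ℤ) ≤ ⌈L⌉ + 1 := by positivity
        rw [show ⌊c⌋ + 1 - (⌊c⌋ - ⌈L⌉) = ⌈L⌉ + 1 by ring]
        norm_cast
        omega
    _ ≤ 3 * L := by
        push_cast
        have := Int.ceil_lt_add_one L
        linarith

lemma close_of_overlap {n : ℤ} {x y : ℤ × ℕ} (h1 : icond q N H P n x)
    (h2 : icond q N H P n y) : |ctr q N x - ctr q N y| < H / P := by
  rw [abs_lt]
  obtain ⟨a1, a2⟩ := h1
  obtain ⟨b1, b2⟩ := h2
  constructor <;> linarith

lemma scond_of_mem_D {x : ℤ × ℕ} (h : x ∈ D P) : scond P x := (mem_filter.1 h).2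

lemma D_card (hP1 : 1 ≤ P) : ((D P).card : ℝ) ≤ 9 * P ^ 2 := by
  have hP0 : (0:ℝ) ≤ 2 * P := by linarith
  have h1 : (D P).card ≤ (⌊2*P⌋ + 1 - 0).toNat * (⌊2*P⌋₊ + 1 - 0) := by
    simpa [D, card_product, Int.card_Icc, Nat.card_Icc] using
      card_filter_le ((Finset.Icc (0 : ℤ) ⌊2 * P⌋) ×ˢ (Finset.Icc 0 ⌊2 * P⌋₊)) (scond P)
  have hA : (((⌊2*P⌋ + 1 - 0).toNat : ℕ) : ℝ) ≤ 3 * P := by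
    have h2 : (0:ℤ) ≤ ⌊2*P⌋ + 1 - 0 := by
      have := Int.floor_nonneg.2 hP0
      omega
    rw [show ((⌊2*P⌋ + 1 - 0).toNat : ℝ) = ((⌊2*P⌋ + 1 - 0 : ℤ) : ℝ) by norm_cast; omega]
    push_cast
    have := Int.floor_le (2*P)
    linarith
  have hB : ((⌊2*P⌋₊ + 1 - 0 : ℕ) : ℝ) ≤ 3 * P := by
    push_cast
    have := Nat.floor_le hP0
    linarith
  calc ((D P).card : ℝ) ≤ (((⌊2*P⌋ + 1 - 0).toNat : ℕ) : ℝ) * ((⌊2*P⌋₊ + 1 - 0 : ℕ) : ℝ) := by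
        exact_mod_cast h1
    _ ≤ (3*P) * (3*P) := by
        have : (0:ℝ) ≤ (((⌊2*P⌋ + 1 - 0).toNat : ℕ) : ℝ) := by positivity
        exact mul_le_mul hA hB (by positivity) (by linarith [hP1])
    _ = 9 * P ^ 2 := by ring

lemma diag_card (hq : q.Prime) (hP1 : 1 ≤ P) (hPH : P ≤ H) (hHP : H * P < q) :
    ((((D P) ×ˢ (D P)).filter
      (fun y => y.1.2 = y.2.2 ∧ |ctr q N y.1 - ctr q N y.2| < H/P)).card : ℝ)
      ≤ 27 * P ^ 2 := by
  have hq0 : (0:ℝ) < q := by exact_mod_cast hq.pos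
  have hH0 : (0:ℝ) < H := by linarith
  have hcard : (((D P) ×ˢ (D P)).filter
      (fun y => y.1.2 = y.2.2 ∧ |ctr q N y.1 - ctr q N y.2| < H/P)).card
      ≤ ((D P) ×ˢ (Finset.Icc (-1:ℤ) 1)).card := by
    apply Finset.card_le_card_of_injOn (fun y => (y.1, y.2.1 - y.1.1))
    · intro y hy
      rw [mem_coe, mem_filter, mem_product] at hy
      obtain ⟨⟨hy1, hy2⟩, hpp, hclose⟩ := hy
      simp only [mem_coe, mem_product, mem_Icc]
      refine ⟨hy1, ?_⟩
      obtain ⟨hp, hPp, h2P, ha0, hap⟩ := scond_of_mem_D hy1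
      have hp0 : (0:ℝ) < (y.1.2 : ℝ) := by linarith
      have hkey : ctr q N y.1 - ctr q N y.2 = ((y.2.1 : ℝ) - y.1.1) * q / y.1.2 := by
        rw [ctr, ctr, ← hpp]
        field_simp
        ring
      rw [hkey, abs_div, abs_of_pos hp0, div_lt_div_iff₀ hp0 (by linarith : (0:ℝ) < P)] at hclose
      rw [abs_mul, abs_of_pos hq0] at hclose
      set d : ℝ := (y.2.1 : ℝ) - y.1.1 with hdd
      have hd : |d| * q * P < 2 * q := by nlinarith [abs_nonneg d]
      have h5 : |d| * P < 2 := by nlinarith [hd, hq0]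
      have hd2 : |d| < 2 := by
        have := le_mul_of_one_le_right (abs_nonneg d) hP1
        linarith
      have hd3 : |y.2.1 - y.1.1| < 2 := by
        have : |((y.2.1 - y.1.1 : ℤ) : ℝ)| < ((2:ℤ):ℝ) := by push_cast; exact hd2
        exact_mod_cast this
      rw [abs_lt] at hd3
      omega
    · intro y hy z hz hyz
      simp only [Prod.mk.injEq] at hyz
      rw [mem_coe, mem_filter] at hy hz
      have h1 : y.1 = z.1 := hyz.1
      have h11 : y.1.1 = z.1.1 := by rw [h1]
      have h2 : y.2.1 = z.2.1 := by have := hyz.2; omega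
      have h3 : y.2.2 = z.2.2 := by rw [← hy.2.1, ← hz.2.1, h1]
      exact Prod.ext h1 (Prod.ext h2 h3)
  have hDc : ((D P).card : ℝ) ≤ 9 * P ^ 2 := D_card hP1
  have h6 : (((D P) ×ˢ (Finset.Icc (-1:ℤ) 1)).card : ℝ) = ((D P).card : ℝ) * 3 := by
    have h7 : (Finset.Icc (-1:ℤ) 1).card = 3 := by rw [Int.card_Icc]; rfl
    rw [card_product, h7]
    push_cast
    ring
  calc ((((D P) ×ˢ (D P)).filter
      (fun y => y.1.2 = y.2.2 ∧ |ctr q N y.1 - ctr q N y.2| < H/P)).card : ℝ)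
      ≤ (((D P) ×ˢ (Finset.Icc (-1:ℤ) 1)).card : ℝ) := by exact_mod_cast hcard
    _ = ((D P).card : ℝ) * 3 := h6
    _ ≤ 9 * P ^ 2 * 3 := by linarith
    _ ≤ 27 * P ^ 2 := by linarith

lemma offdiag_card (hq : q.Prime) (hN0 : 0 ≤ N) (hP1 : 1 ≤ P) (hPH : P ≤ H)
    (hHP : H * P < q) :
    ((((D P) ×ˢ (D P)).filter
      (fun y => y.1.2 ≠ y.2.2 ∧ |ctr q N y.1 - ctr q N y.2| < H/P)).card : ℝ)
      ≤ 32 * P ^ 2 := by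
  have hq0 : (0:ℝ) < q := by exact_mod_cast hq.pos
  have hH0 : (0:ℝ) < H := by linarith
  have hP0 : (0:ℝ) < P := by linarith
  set E := ((D P) ×ˢ (D P)).filter
    (fun y => y.1.2 ≠ y.2.2 ∧ |ctr q N y.1 - ctr q N y.2| < H/P) with hE
  set Qr : Finset ℕ := Finset.Ioc ⌊P⌋₊ ⌊2*P⌋₊ with hQr
  have hmap : ∀ y ∈ E, (y.1.2, y.2.2) ∈ Qr ×ˢ Qr := by
    intro y hy
    rw [hE, mem_filter, mem_product] at hy
    obtain ⟨⟨hy1, hy2⟩, -, -⟩ := hy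
    obtain ⟨hp, hPp, h2P, -, -⟩ := scond_of_mem_D hy1
    obtain ⟨hp', hPp', h2P', -, -⟩ := scond_of_mem_D hy2
    rw [mem_product, hQr, mem_Ioc, mem_Ioc]
    exact ⟨⟨(Nat.floor_lt (by linarith)).2 hPp, Nat.le_floor h2P⟩,
      (Nat.floor_lt (by linarith)).2 hPp', Nat.le_floor h2P'⟩
  have hfib : E.card = ∑ pp ∈ Qr ×ˢ Qr, (E.filter (fun y => (y.1.2, y.2.2) = pp)).card :=
    Finset.card_eq_sum_card_fiberwise hmap
  have hfiber : ∀ pp ∈ Qr ×ˢ Qr, (E.filter (fun y => (y.1.2, y.2.2) = pp)).card ≤ 8 := by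
    intro pp _
    rcases (E.filter (fun y => (y.1.2, y.2.2) = pp)).eq_empty_or_nonempty with h | ⟨w, hw⟩
    · simp [h]
    have hwE := (mem_filter.1 hw).1
    have hwpp : (w.1.2, w.2.2) = pp := (mem_filter.1 hw).2
    rw [hE, mem_filter, mem_product] at hwE
    obtain ⟨⟨hw1, hw2⟩, hwne, -⟩ := hwE
    obtain ⟨hp, hPp, h2P, -, -⟩ := scond_of_mem_D hw1
    obtain ⟨hp', hPp', h2P', -, -⟩ := scond_of_mem_D hw2
    rw [← hwpp]
    set p : ℕ := w.1.2 with hpdef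
    set p' : ℕ := w.2.2 with hp'def
    have hpR : P < (p:ℝ) := hPp
    have hp'R : P < (p':ℝ) := hPp'
    have hp0 : (0:ℝ) < (p:ℝ) := by linarith
    have hp'0 : (0:ℝ) < (p':ℝ) := by linarith
    set r : ℝ := N * ((p':ℝ) - p) / q with hrdef
    set s : ℤ := ⌈r⌉ with hsdef
    have hcard8 : (Finset.Icc (s - 4) (s + 3)).card = 8 := by
      rw [Int.card_Icc]
      rw [show s + 3 + 1 - (s - 4) = 8 by ring]
      rfl
    rw [← hcard8]
    apply Finset.card_le_card_of_injOn (fun y => y.1.1 * (p':ℤ) - y.2.1 * (p:ℤ))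
    · intro y hy
      have hyE := (mem_filter.1 hy).1
      have hypp : (y.1.2, y.2.2) = (p, p') := (mem_filter.1 hy).2
      have hyp1 : y.1.2 = p := (Prod.ext_iff.1 hypp).1
      have hyp' : y.2.2 = p' := (Prod.ext_iff.1 hypp).2
      rw [hE, mem_filter, mem_product] at hyE
      obtain ⟨⟨hy1, hy2⟩, -, hclose⟩ := hyE
      obtain ⟨-, -, -, ha0, hap⟩ := scond_of_mem_D hy1
      obtain ⟨-, -, -, ha0', hap'⟩ := scond_of_mem_D hy2
      set a : ℤ := y.1.1 with hadef
      set a' : ℤ := y.2.1 with ha'def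
      set t : ℤ := a * (p':ℤ) - a' * (p:ℤ) with htdef
      have hkey : ctr q N y.1 - ctr q N y.2
          = (N * ((p':ℝ) - p) - q * (t:ℝ)) / ((p:ℝ) * p') := by
        rw [ctr, ctr, hyp1, hyp', htdef]
        push_cast
        field_simp
        ring
      rw [hkey] at hclose
      rw [abs_div, abs_of_pos (by positivity : (0:ℝ) < (p:ℝ) * p'),
        div_lt_iff₀ (by positivity : (0:ℝ) < (p:ℝ) * p')] at hclose
      have hnum : |N * ((p':ℝ) - p) - q * (t:ℝ)| < 4 * q := by
        have h1 : H / P * ((p:ℝ) * p') ≤ H / P * (2*P * (2*P)) := by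
          apply mul_le_mul_of_nonneg_left _ (by positivity)
          nlinarith
        have h2 : H / P * (2*P * (2*P)) = 4 * (H * P) := by field_simp; ring
        nlinarith
      have hrt : |r - (t:ℝ)| < 4 := by
        have h3 : r - (t:ℝ) = (N * ((p':ℝ) - p) - q * (t:ℝ)) / q := by
          rw [hrdef]; field_simp
        rw [h3, abs_div, abs_of_pos hq0, div_lt_iff₀ hq0]
        linarith [hnum]
      rw [abs_lt] at hrt
      show t ∈ Finset.Icc (s - 4) (s + 3)
      rw [mem_Icc]
      constructor
      · have hsr : (s:ℝ) < r + 1 := Int.ceil_lt_add_one r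
        have : ((s - 5 : ℤ):ℝ) < (t:ℝ) := by push_cast; linarith
        have h4 : (s : ℤ) - 5 < t := by exact_mod_cast this
        omega
      · have hsr : r ≤ (s:ℝ) := Int.le_ceil r
        have : (t:ℝ) < ((s + 4 : ℤ):ℝ) := by push_cast; linarith
        have h4 : t < s + 4 := by exact_mod_cast this
        omega
    · intro y hy z hz hyz
      simp only at hyz
      rw [mem_coe, mem_filter] at hy hz
      have hypp : (y.1.2, y.2.2) = (p, p') := hy.2
      have hzpp : (z.1.2, z.2.2) = (p, p') := hz.2
      have hyp1 : y.1.2 = p := (Prod.ext_iff.1 hypp).1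
      have hyp2 : y.2.2 = p' := (Prod.ext_iff.1 hypp).2
      have hzp1 : z.1.2 = p := (Prod.ext_iff.1 hzpp).1
      have hzp2 : z.2.2 = p' := (Prod.ext_iff.1 hzpp).2
      rw [hE, mem_filter, mem_product] at hy hz
      obtain ⟨⟨hy1, hy2⟩, hyne, -⟩ := hy.1
      obtain ⟨⟨hz1, hz2⟩, -, -⟩ := hz.1
      obtain ⟨-, -, -, ha0, hap⟩ := scond_of_mem_D hy1
      obtain ⟨-, -, -, ha0', hap'⟩ := scond_of_mem_D hy2
      obtain ⟨-, -, -, hb0, hbp⟩ := scond_of_mem_D hz1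
      obtain ⟨-, -, -, hb0', hbp'⟩ := scond_of_mem_D hz2
      have hpne : p ≠ p' := by rw [hpdef, hp'def]; exact hwne
      have hdvd : (p:ℤ) ∣ (y.1.1 - z.1.1) * (p':ℤ) :=
        ⟨y.2.1 - z.2.1, by linear_combination hyz⟩
      have hpZ : Prime (p:ℤ) := Nat.prime_iff_prime_int.1 hp
      have hab : y.1.1 = z.1.1 := by
        rcases hpZ.dvd_mul.1 hdvd with h | h
        · have habs : |y.1.1 - z.1.1| < (p:ℤ) := by
            rw [hyp1] at hap
            rw [hzp1] at hbp
            rw [abs_lt]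
            omega
          have := Int.eq_zero_of_abs_lt_dvd h habs
          omega
        · exfalso
          exact hpne ((Nat.prime_dvd_prime_iff_eq hp hp').1 (Int.natCast_dvd_natCast.1 h))
      have hab' : y.2.1 = z.2.1 := by
        have hpne0 : (p:ℤ) ≠ 0 := by exact_mod_cast hp.pos.ne'
        have : y.2.1 * (p:ℤ) = z.2.1 * (p:ℤ) := by linear_combination (p':ℤ) * hab - hyz
        exact mul_right_cancel₀ hpne0 this
      have e1 : y.1 = z.1 := Prod.ext hab (hyp1.trans hzp1.symm)
      have e2 : y.2 = z.2 := Prod.ext hab' (hyp2.trans hzp2.symm)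
      exact Prod.ext e1 e2
  have hQrcard : ((Qr.card : ℕ) : ℝ) ≤ 2 * P := by
    rw [hQr, Nat.card_Ioc]
    have h1 : ⌊2*P⌋₊ ≤ 2*P := Nat.floor_le (by linarith)
    have h2 : ((⌊2*P⌋₊ - ⌊P⌋₊ : ℕ) : ℝ) ≤ (⌊2*P⌋₊ : ℝ) := by
      have : (⌊2*P⌋₊ - ⌊P⌋₊ : ℕ) ≤ ⌊2*P⌋₊ := Nat.sub_le _ _
      exact_mod_cast this
    linarith
  have htotal : E.card ≤ (Qr ×ˢ Qr).card * 8 := by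
    rw [hfib]
    calc ∑ pp ∈ Qr ×ˢ Qr, (E.filter (fun y => (y.1.2, y.2.2) = pp)).card
        ≤ ∑ _pp ∈ Qr ×ˢ Qr, 8 := Finset.sum_le_sum hfiber
      _ = (Qr ×ˢ Qr).card * 8 := by rw [Finset.sum_const, smul_eq_mul]
  calc ((((D P) ×ˢ (D P)).filter
      (fun y => y.1.2 ≠ y.2.2 ∧ |ctr q N y.1 - ctr q N y.2| < H/P)).card : ℝ)
      = (E.card : ℝ) := by rw [hE]
    _ ≤ ((Qr ×ˢ Qr).card : ℝ) * 8 := by exact_mod_cast htotal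
    _ = ((Qr.card : ℕ) : ℝ) * ((Qr.card : ℕ) : ℝ) * 8 := by rw [card_product]; push_cast; ring
    _ ≤ (2*P) * (2*P) * 8 := by
        apply mul_le_mul_of_nonneg_right _ (by norm_num)
        exact mul_le_mul hQrcard hQrcard (by positivity) (by linarith)
    _ = 32 * P ^ 2 := by ring

set_option maxHeartbeats 2000000 in
lemma onedim (hq : q.Prime) (hN0 : 0 ≤ N) (hNq : N < q) (hP1 : 1 ≤ P) (hPH : P ≤ H)
    (hHP : H * P < q) :
    ∑ n ∈ Finset.Icc (-(2*(q:ℤ))) (2*(q:ℤ)), ((F q N H P n).card : ℝ)^2 ≤ 177 * (H * P) := by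
  have hq0 : (0:ℝ) < q := by exact_mod_cast hq.pos
  have hP0 : (0:ℝ) < P := by linarith
  have hH0 : (0:ℝ) < H := by linarith
  set B := Finset.Icc (-(2*(q:ℤ))) (2*(q:ℤ)) with hB
  set DD := (D P) ×ˢ (D P) with hDD
  have hsq : ∀ n : ℤ, (F q N H P n).card ^ 2 = (DD.filter
      (fun y => icond q N H P n y.1 ∧ icond q N H P n y.2)).card := by
    intro n
    rw [hDD, Finset.filter_product, card_product, sq]
    rfl
  have hNat : ∑ n ∈ B, (F q N H P n).card ^ 2
      = ∑ y ∈ DD, (B.filter (fun n => icond q N H P n y.1 ∧ icond q N H P n y.2)).card := by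
    calc ∑ n ∈ B, (F q N H P n).card ^ 2
        = ∑ n ∈ B, ∑ y ∈ DD, (if icond q N H P n y.1 ∧ icond q N H P n y.2 then 1 else 0) := by
          refine Finset.sum_congr rfl (fun n _ => ?_)
          rw [hsq n, Finset.card_filter]
      _ = ∑ y ∈ DD, ∑ n ∈ B, (if icond q N H P n y.1 ∧ icond q N H P n y.2 then 1 else 0) :=
          Finset.sum_comm
      _ = ∑ y ∈ DD, (B.filter (fun n => icond q N H P n y.1 ∧ icond q N H P n y.2)).card := by
          refine Finset.sum_congr rfl (fun y _ => ?_)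
          rw [Finset.card_filter]
  have hbound : ∀ y ∈ DD,
      ((B.filter (fun n => icond q N H P n y.1 ∧ icond q N H P n y.2)).card : ℝ)
        ≤ if |ctr q N y.1 - ctr q N y.2| < H/P then 3*(H/P) else 0 := by
    intro y _
    by_cases hc : |ctr q N y.1 - ctr q N y.2| < H/P
    · rw [if_pos hc]
      have h9 := interval_card (c := ctr q N y.1) (L := H/P) ((one_le_div hP0).2 hPH) B
        (fun n => icond q N H P n y.1 ∧ icond q N H P n y.2) (fun n hn => ⟨hn.1.1, hn.1.2⟩)
      convert h9 using 4
    · rw [if_neg hc]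
      have : (B.filter (fun n => icond q N H P n y.1 ∧ icond q N H P n y.2)) = ∅ := by
        rw [Finset.filter_eq_empty_iff]
        intro n _ hcond
        exact hc (close_of_overlap hcond.1 hcond.2)
      rw [this]
      norm_num
  have hSc : (((DD.filter (fun y => |ctr q N y.1 - ctr q N y.2| < H/P))).card : ℝ)
      ≤ 59 * P ^ 2 := by
    have hsub : DD.filter (fun y => |ctr q N y.1 - ctr q N y.2| < H/P)
        ⊆ (DD.filter (fun y => y.1.2 = y.2.2 ∧ |ctr q N y.1 - ctr q N y.2| < H/P))
          ∪ (DD.filter (fun y => y.1.2 ≠ y.2.2 ∧ |ctr q N y.1 - ctr q N y.2| < H/P)) := by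
      intro y hy
      rw [mem_filter] at hy
      rw [mem_union, mem_filter, mem_filter]
      by_cases h : y.1.2 = y.2.2
      · exact Or.inl ⟨hy.1, h, hy.2⟩
      · exact Or.inr ⟨hy.1, h, hy.2⟩
    have h1 := (Finset.card_le_card hsub).trans (Finset.card_union_le _ _)
    have h2 := diag_card (N := N) hq hP1 hPH hHP
    have h3 := offdiag_card (N := N) hq hN0 hP1 hPH hHP
    have h4 : ((DD.filter (fun y => |ctr q N y.1 - ctr q N y.2| < H/P)).card : ℝ)
        ≤ ((DD.filter (fun y => y.1.2 = y.2.2 ∧ |ctr q N y.1 - ctr q N y.2| < H/P)).card : ℝ)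
          + ((DD.filter (fun y => y.1.2 ≠ y.2.2 ∧ |ctr q N y.1 - ctr q N y.2| < H/P)).card : ℝ) := by
      exact_mod_cast h1
    rw [hDD] at h4 ⊢
    linarith
  calc ∑ n ∈ B, ((F q N H P n).card : ℝ)^2
      = ((∑ n ∈ B, (F q N H P n).card ^ 2 : ℕ) : ℝ) := by push_cast; rfl
    _ = ((∑ y ∈ DD, (B.filter
          (fun n => icond q N H P n y.1 ∧ icond q N H P n y.2)).card : ℕ) : ℝ) := by rw [hNat]
    _ = ∑ y ∈ DD, ((B.filter
          (fun n => icond q N H P n y.1 ∧ icond q N H P n y.2)).card : ℝ) := by push_cast; rfl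
    _ ≤ ∑ y ∈ DD, (if |ctr q N y.1 - ctr q N y.2| < H/P then 3*(H/P) else 0) :=
          Finset.sum_le_sum hbound
    _ = ((DD.filter (fun y => |ctr q N y.1 - ctr q N y.2| < H/P)).card : ℝ) * (3*(H/P)) := by
          rw [Finset.sum_ite, Finset.sum_const, Finset.sum_const, smul_zero, add_zero,
            nsmul_eq_mul]
    _ ≤ (59 * P ^ 2) * (3*(H/P)) := by
          apply mul_le_mul_of_nonneg_right hSc (by positivity)
    _ = 177 * (H * P) := by field_simp; ring
  done

end OneDim
end Stmt8aux

section Assembly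
open Stmt8aux

lemma Acount_eq {k : ℕ} (q : Fin k → ℕ) (N H P : Fin k → ℝ) (m : Fin k → ℤ) :
    Acount q N H P m = ∏ i, (F (q i) (N i) (H i) (P i) (m i)).card := by
  set T : (i : Fin k) → Set (ℤ × ℕ) :=
    fun i => ↑(F (q i) (N i) (H i) (P i) (m i)) with hTdef
  have hT : ∀ (i : Fin k) (x : ℤ × ℕ),
      x ∈ T i ↔ (x.2.Prime ∧ P i < (x.2 : ℝ) ∧ (x.2 : ℝ) ≤ 2 * P i ∧
        0 ≤ x.1 ∧ x.1 < (x.2 : ℤ) ∧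
        (N i - (x.1 : ℝ) * (q i : ℝ)) / (x.2 : ℝ) - H i / P i < (m i : ℝ) ∧
        (m i : ℝ) ≤ (N i - (x.1 : ℝ) * (q i : ℝ)) / (x.2 : ℝ)) := by
    intro i x
    rw [hTdef]
    simp only [Finset.mem_coe, mem_F]
    unfold scond icond ctr
    tauto
  set e : ((Fin k → ℤ) × (Fin k → ℕ)) ≃ (Fin k → ℤ × ℕ) :=
    (Equiv.arrowProdEquivProdArrow (Fin k) (fun _ => ℤ) (fun _ => ℕ)).symm with hedef
  have hset : {ap : (Fin k → ℤ) × (Fin k → ℕ) |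
      ∀ i, (ap.2 i).Prime ∧ P i < (ap.2 i : ℝ) ∧ (ap.2 i : ℝ) ≤ 2 * P i ∧
        0 ≤ ap.1 i ∧ ap.1 i < (ap.2 i : ℤ) ∧
        (N i - (ap.1 i : ℝ) * (q i : ℝ)) / (ap.2 i : ℝ) - H i / P i < (m i : ℝ) ∧
        (m i : ℝ) ≤ (N i - (ap.1 i : ℝ) * (q i : ℝ)) / (ap.2 i : ℝ)}
      = e ⁻¹' (Set.univ.pi T) := by
    ext ap
    simp only [Set.mem_preimage, Set.mem_pi, Set.mem_univ, forall_true_left, Set.mem_setOf_eq]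
    constructor
    · intro h i
      exact (hT i (ap.1 i, ap.2 i)).2 (h i)
    · intro h i
      exact (hT i (ap.1 i, ap.2 i)).1 (h i)
  rw [Acount, hset]
  have h1 : e ⁻¹' (Set.univ.pi T) = e.symm '' (Set.univ.pi T) := by
    rw [Equiv.image_eq_preimage_symm, Equiv.symm_symm]
  rw [h1, Set.ncard_image_of_injective _ e.symm.injective]
  rw [← Nat.card_coe_set_eq]
  rw [Nat.card_congr (Equiv.Set.univPi T), Nat.card_pi]
  refine Finset.prod_congr rfl (fun i _ => ?_)
  rw [Nat.card_coe_set_eq, hTdef, Set.ncard_coe_finset]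

theorem stmt_8 (k : ℕ) (hk : 0 < k) :
    ∃ C : ℝ, 0 < C ∧
      ∀ (q : Fin k → ℕ), (∀ i, (q i).Prime) →
      ∀ (N H P : Fin k → ℝ), (∀ i, 0 ≤ N i ∧ N i < (q i : ℝ)) →
        (∀ i, 1 ≤ P i ∧ P i ≤ H i ∧ H i * P i < (q i : ℝ)) →
        (∀ m : Fin k → ℤ, Acount q N H P m ≠ 0 → ∀ i, |m i| ≤ 2 * (q i : ℤ)) ∧
        (∑' m : Fin k → ℤ, (Acount q N H P m : ℝ)) ≤
          (∑' m : Fin k → ℤ, (Acount q N H P m : ℝ) ^ 2) ∧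
        (∑' m : Fin k → ℤ, (Acount q N H P m : ℝ) ^ 2) ≤ C * (∏ i, H i) * (∏ i, P i) := by
  refine ⟨(177:ℝ)^k, by positivity, ?_⟩
  intro q hq N H P hN hP
  have hA : ∀ m, Acount q N H P m = ∏ i, (F (q i) (N i) (H i) (P i) (m i)).card :=
    fun m => Acount_eq q N H P m
  have hsupp : ∀ m : Fin k → ℤ, Acount q N H P m ≠ 0 → ∀ i, |m i| ≤ 2 * (q i : ℤ) := by
    intro m hm i
    rw [hA, Finset.prod_ne_zero_iff] at hm
    have hne : (F (q i) (N i) (H i) (P i) (m i)).Nonempty :=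
      Finset.card_ne_zero.1 (hm i (Finset.mem_univ i))
    exact supp (hq i) (hN i).1 (hN i).2 (hP i).1 (hP i).2.1 (hP i).2.2 hne
  set B : Finset (Fin k → ℤ) :=
    Fintype.piFinset (fun i => Finset.Icc (-(2*(q i:ℤ))) (2*(q i:ℤ))) with hB
  have hvanish : ∀ m ∉ B, Acount q N H P m = 0 := by
    intro m hm
    by_contra h
    apply hm
    rw [hB, Fintype.mem_piFinset]
    intro i
    rw [Finset.mem_Icc]
    have h2 := hsupp m h i
    rw [abs_le] at h2
    omega
  have hsum1 : ∑' m : Fin k → ℤ, (Acount q N H P m : ℝ) = ∑ m ∈ B, (Acount q N H P m : ℝ) :=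
    tsum_eq_sum (fun m hm => by rw [hvanish m hm]; norm_num)
  have hsum2 : ∑' m : Fin k → ℤ, (Acount q N H P m : ℝ)^2
      = ∑ m ∈ B, (Acount q N H P m : ℝ)^2 :=
    tsum_eq_sum (fun m hm => by rw [hvanish m hm]; norm_num)
  refine ⟨hsupp, ?_, ?_⟩
  · rw [hsum1, hsum2]
    apply Finset.sum_le_sum
    intro m _
    have h1 : Acount q N H P m ≤ Acount q N H P m ^ 2 :=
      Nat.le_self_pow (by norm_num) _
    calc (Acount q N H P m : ℝ) ≤ ((Acount q N H P m ^ 2 : ℕ) : ℝ) := by exact_mod_cast h1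
      _ = (Acount q N H P m : ℝ)^2 := by push_cast; ring
  · rw [hsum2]
    have key : ∑ m ∈ B, (Acount q N H P m : ℝ)^2
        = ∏ i, ∑ n ∈ Finset.Icc (-(2*(q i:ℤ))) (2*(q i:ℤ)),
            ((F (q i) (N i) (H i) (P i) n).card : ℝ)^2 := by
      rw [Finset.prod_univ_sum]
      refine Finset.sum_congr rfl (fun m _ => ?_)
      rw [hA m]
      push_cast
      rw [← Finset.prod_pow]
    rw [key]
    have hone : ∀ i : Fin k, ∑ n ∈ Finset.Icc (-(2*(q i:ℤ))) (2*(q i:ℤ)),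
        ((F (q i) (N i) (H i) (P i) n).card : ℝ)^2 ≤ 177 * (H i * P i) :=
      fun i => onedim (hq i) (hN i).1 (hN i).2 (hP i).1 (hP i).2.1 (hP i).2.2
    calc ∏ i, ∑ n ∈ Finset.Icc (-(2*(q i:ℤ))) (2*(q i:ℤ)),
          ((F (q i) (N i) (H i) (P i) n).card : ℝ)^2
        ≤ ∏ i, (177 * (H i * P i)) := by
          apply Finset.prod_le_prod
          · intro i _
            exact Finset.sum_nonneg (fun n _ => sq_nonneg _)
          · intro i _
            exact hone i
      _ = (177:ℝ)^k * (∏ i, H i) * (∏ i, P i) := by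
          rw [Finset.prod_mul_distrib, Finset.prod_const, Finset.card_univ, Fintype.card_fin,
            Finset.prod_mul_distrib]
          ring
end Assembly
end

section
/- Let k ≥ 1, let N be a tuple of positive real numbers, and let a(n) be complex numbers indexed by n ∈ ℤ^k ∩ (0,N]. Let b be a C^k function on ℝ^k such that there is a tuple B = (B_1,…,B_k) of positive reals with |∂^{|κ|} b / (∂x_1^{κ_1}⋯∂x_k^{κ_k})(x)| ≤ B_1^{κ_1}⋯B_k^{κ_k} for all x ∈ (0,N] and every multi-index κ = (κ_1,…,κ_k) with each κ_i ∈ {0,1}. Then |Σ_{n ∈ ℤ^k ∩ (0,N]} a(n) b(n)| ≤ Σ_{J ⊆ {1,…,k}} (∏_{j∈J} B_j) ∫⋯∫_{(0,N_j], j∈J} |A_{(ᶜJ),(J)}(N_{(ᶜJ)}, t_{(J)})| dt_{(J)}, where ᶜJ = {1,…,k} \ J and for a partition I ∪ J of {1,…,k}, A_{(I),(J)}(t_{(I)}, s_{(J)}) = Σ_{0 < n_j ≤ t_j for j∈I} Σ_{0 < n_j ≤ s_j for j∈J} a(n). -/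
open scoped BigOperators
open MeasureTheory

/-- The partial derivative of `b` in direction `i`. -/
noncomputable def pderivI {k : ℕ} (i : Fin k) (b : (Fin k → ℝ) → ℂ) : (Fin k → ℝ) → ℂ :=
  fun x => fderiv ℝ b x (Pi.single i 1)

/-- The mixed partial derivative `∂^{|S|} b / ∏_{i ∈ S} ∂x_i` for a set `S` of coordinates. -/
noncomputable def mixedPartial {k : ℕ} (S : Finset (Fin k)) (b : (Fin k → ℝ) → ℂ) :
    (Fin k → ℝ) → ℂ :=
  (S.sort (· ≤ ·)).foldr pderivI b

lemma sort_insert_max {k : ℕ} {S : Finset (Fin k)} {i₀ : Fin k} (h : ∀ x ∈ S, x < i₀) :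
    (insert i₀ S).sort (· ≤ ·) = S.sort (· ≤ ·) ++ [i₀] := by
  have hi : i₀ ∉ S := fun hm => absurd (h _ hm) (lt_irrefl _)
  refine (fun p s1 s2 => List.Perm.eq_of_pairwise' s1 s2 p) ?_ (Finset.pairwise_sort _ _) ?_
  · refine ((insert i₀ S).sort_perm_toList _).trans ?_
    refine (Finset.toList_insert hi).trans ?_
    refine List.Perm.trans ?_ (List.perm_append_comm (l₁ := S.sort (· ≤ ·)) (l₂ := [i₀])).symm
    exact List.Perm.cons _ ((S.sort_perm_toList _).symm)
  · rw [List.pairwise_append]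
    refine ⟨Finset.pairwise_sort _ _, List.pairwise_singleton _ _, ?_⟩
    intro x hx y hy
    rw [List.mem_singleton] at hy
    subst hy
    exact (h x ((Finset.mem_sort _).mp hx)).le

lemma mixedPartial_insert {k : ℕ} {S : Finset (Fin k)} {i₀ : Fin k} (h : ∀ x ∈ S, x < i₀)
    (b : (Fin k → ℝ) → ℂ) :
    mixedPartial (insert i₀ S) b = mixedPartial S (pderivI i₀ b) := by
  unfold mixedPartial
  rw [sort_insert_max h, List.foldr_append]; rfl

lemma contDiff_pderivI {k n : ℕ} (i : Fin k) {b : (Fin k → ℝ) → ℂ}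
    (hb : ContDiff ℝ (n + 1 : ℕ) b) : ContDiff ℝ (n : ℕ) (pderivI i b) := by
  have h1 : ContDiff ℝ (n : ℕ) (fderiv ℝ b) := by
    apply hb.fderiv_right
    norm_cast
  exact (ContinuousLinearMap.apply ℝ ℂ (Pi.single i 1)).contDiff.comp h1

variable {k : ℕ}


noncomputable def AsumZ (N : Fin k → ℝ) (a : (Fin k → ℤ) → ℂ) (J : Finset (Fin k))
    (m : {i // i ∈ J} → ℤ) : ℂ :=
  ∑ n ∈ Fintype.piFinset (fun i => Finset.Ioc (0 : ℤ) (if h : i ∈ J then m ⟨i, h⟩ else ⌊N i⌋)),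
    a n

noncomputable def Asum (N : Fin k → ℝ) (a : (Fin k → ℤ) → ℂ) (J : Finset (Fin k))
    (t : {i // i ∈ J} → ℝ) : ℂ :=
  AsumZ N a J (fun j => ⌊t j⌋)

lemma Asum_def (N : Fin k → ℝ) (a : (Fin k → ℤ) → ℂ) (J : Finset (Fin k))
    (t : {i // i ∈ J} → ℝ) :
    Asum N a J t = ∑ n ∈ Fintype.piFinset
      (fun i => Finset.Ioc (0 : ℤ) (if h : i ∈ J then ⌊t ⟨i, h⟩⌋ else ⌊N i⌋)), a n := rfl

lemma measurable_Asum (N : Fin k → ℝ) (a : (Fin k → ℤ) → ℂ) (J : Finset (Fin k)) :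
    Measurable fun t => Asum N a J t :=
  (measurable_of_countable (AsumZ N a J)).comp
    (measurable_pi_lambda _ fun j => (measurable_pi_apply j).floor)

lemma abs_Asum_le (N : Fin k → ℝ) (a : (Fin k → ℤ) → ℂ) (J : Finset (Fin k))
    {t : {i // i ∈ J} → ℝ}
    (ht : t ∈ Set.univ.pi fun j : {i // i ∈ J} => Set.Ioc (0:ℝ) (N j.1)) :
    ‖Asum N a J t‖ ≤
      ∑ n ∈ Fintype.piFinset (fun i => Finset.Ioc (0:ℤ) ⌊N i⌋), ‖a n‖ := by
  rw [Asum_def]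
  refine le_trans (norm_sum_le _ _) ?_
  refine Finset.sum_le_sum_of_subset_of_nonneg ?_ (fun _ _ _ => by positivity)
  refine Fintype.piFinset_subset _ _ fun i => ?_
  by_cases h : i ∈ J
  · simp only [dif_pos h]
    exact Finset.Ioc_subset_Ioc le_rfl (Int.floor_le_floor ((ht ⟨i, h⟩ (Set.mem_univ _)).2))
  · simp [dif_neg h]

lemma integrableOn_abs_Asum (N : Fin k → ℝ) (a : (Fin k → ℤ) → ℂ) (J : Finset (Fin k)) :
    IntegrableOn (fun t => ‖Asum N a J t‖)
      (Set.univ.pi fun j : {i // i ∈ J} => Set.Ioc (0:ℝ) (N j.1)) volume := by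
  set M : ℝ := ∑ n ∈ Fintype.piFinset (fun i => Finset.Ioc (0:ℤ) ⌊N i⌋), ‖a n‖ with hM
  have hbox : MeasurableSet (Set.univ.pi fun j : {i // i ∈ J} => Set.Ioc (0:ℝ) (N j.1)) :=
    MeasurableSet.univ_pi fun j => measurableSet_Ioc
  have hfin : volume (Set.univ.pi fun j : {i // i ∈ J} => Set.Ioc (0:ℝ) (N j.1)) < ⊤ := by
    rw [volume_pi_pi]
    exact ENNReal.prod_lt_top fun j _ => by simp [Real.volume_Ioc]
  refine Integrable.mono' (g := fun _ => M) ?_ ?_ ?_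
  · exact integrableOn_const hfin.ne
  · exact ((continuous_norm.measurable.comp (measurable_Asum N a J)).aestronglyMeasurable).restrict
  · refine (ae_restrict_iff' hbox).mpr (Filter.Eventually.of_forall fun t ht => ?_)
    rw [Real.norm_eq_abs, abs_of_nonneg (norm_nonneg _)]
    exact abs_Asum_le N a J ht

lemma pi_restrict {ι : Type*} [Fintype ι] (s : ι → Set ℝ) (hs : ∀ i, MeasurableSet (s i)) :
    Measure.pi (fun i : ι => (volume : Measure ℝ).restrict (s i)) =
      (volume : Measure (ι → ℝ)).restrict (Set.univ.pi s) := by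
  refine Measure.pi_eq fun u hu => ?_
  rw [Measure.restrict_apply (MeasurableSet.univ_pi hu), ← Set.pi_inter_distrib, volume_pi,
    Measure.pi_pi]
  exact Finset.prod_congr rfl fun i _ => (Measure.restrict_apply (hu i)).symm


def glueFn (i₀ : Fin k) (J : Finset (Fin k)) :
    ℝ × ({i // i ∈ J} → ℝ) → ({i // i ∈ insert i₀ J} → ℝ) :=
  fun p j => if h : j.1 ∈ J then p.2 ⟨j.1, h⟩ else p.1

lemma measurable_glueFn (i₀ : Fin k) (J : Finset (Fin k)) : Measurable (glueFn i₀ J) := by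
  apply measurable_pi_lambda
  intro j
  by_cases h : j.1 ∈ J
  · simp only [glueFn, dif_pos h]; exact (measurable_pi_apply _).comp measurable_snd
  · simp only [glueFn, dif_neg h]; exact measurable_fst

lemma map_glueFn (N : Fin k → ℝ) {i₀ : Fin k} {J : Finset (Fin k)} (hi : i₀ ∉ J) :
    Measure.map (glueFn i₀ J)
      (((volume : Measure ℝ).restrict (Set.Ioc 0 (N i₀))).prod
        (Measure.pi fun j : {i // i ∈ J} => (volume : Measure ℝ).restrict (Set.Ioc 0 (N j.1)))) =
      Measure.pi fun j : {i // i ∈ insert i₀ J} =>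
        (volume : Measure ℝ).restrict (Set.Ioc 0 (N j.1)) := by
  classical
  refine (Measure.pi_eq fun S hS => ?_).symm
  rw [Measure.map_apply (measurable_glueFn i₀ J) (MeasurableSet.univ_pi hS)]
  have hpre : glueFn i₀ J ⁻¹' (Set.univ.pi S) =
      (S ⟨i₀, Finset.mem_insert_self _ _⟩) ×ˢ
        (Set.univ.pi fun j : {i // i ∈ J} => S ⟨j.1, Finset.mem_insert_of_mem j.2⟩) := by
    ext p
    simp only [Set.mem_preimage, Set.mem_pi, Set.mem_univ, true_implies, Set.mem_prod]
    constructor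
    · intro hp
      refine ⟨?_, fun j => ?_⟩
      · have h := hp ⟨i₀, Finset.mem_insert_self _ _⟩
        simpa only [glueFn, dif_neg hi] using h
      · have h := hp ⟨j.1, Finset.mem_insert_of_mem j.2⟩
        simpa only [glueFn, dif_pos j.2] using h
    · rintro ⟨h1, h2⟩ j
      by_cases h : j.1 ∈ J
      · have := h2 ⟨j.1, h⟩
        simp only [glueFn, dif_pos h]
        exact this
      · have hj1 : j.1 = i₀ := by
          rcases Finset.mem_insert.mp j.2 with h' | h'
          · exact h'
          · exact absurd h' h
        have hj : (⟨i₀, Finset.mem_insert_self _ _⟩ : {i // i ∈ insert i₀ J}) = j :=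
          Subtype.ext hj1.symm
        simp only [glueFn, dif_neg h]
        exact hj ▸ h1
  rw [hpre, Measure.prod_prod, Measure.pi_pi]
  symm
  set f : Fin k → ENNReal := fun i =>
    if h : i ∈ insert i₀ J then (volume.restrict (Set.Ioc (0:ℝ) (N i))) (S ⟨i, h⟩) else 1 with hf
  have key : ∀ j : {i // i ∈ insert i₀ J},
      (volume.restrict (Set.Ioc (0:ℝ) (N j.1))) (S j) = f j.1 := by
    intro j; rw [hf]; simp only [dif_pos j.2]
  calc ∏ j : {i // i ∈ insert i₀ J}, (volume.restrict (Set.Ioc (0:ℝ) (N j.1))) (S j)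
      = ∏ j : {i // i ∈ insert i₀ J}, f j.1 := Fintype.prod_congr _ _ key
    _ = ∏ i ∈ insert i₀ J, f i := Finset.prod_coe_sort _ _
    _ = f i₀ * ∏ i ∈ J, f i := Finset.prod_insert hi
    _ = (volume.restrict (Set.Ioc (0:ℝ) (N i₀))) (S ⟨i₀, Finset.mem_insert_self _ _⟩) *
        ∏ j : {i // i ∈ J},
          (volume.restrict (Set.Ioc (0:ℝ) (N j.1))) (S ⟨j.1, Finset.mem_insert_of_mem j.2⟩) := by
        congr 1
        · rw [hf]; simp only [dif_pos (Finset.mem_insert_self i₀ J)]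
        · rw [← Finset.prod_coe_sort J f]
          refine Fintype.prod_congr _ _ fun j => ?_
          rw [hf]; simp only [dif_pos (Finset.mem_insert_of_mem j.2)]

lemma Asum_indicator (N : Fin k → ℝ) (a : (Fin k → ℤ) → ℂ) {i₀ : Fin k} {J : Finset (Fin k)}
    (hi : i₀ ∉ J) {s : ℝ} (hs : s ∈ Set.Ioc (0:ℝ) (N i₀)) (t : {i // i ∈ J} → ℝ) :
    Asum N (fun n => if n i₀ ≤ ⌊s⌋ then a n else 0) J t
      = Asum N a (insert i₀ J) (glueFn i₀ J (s, t)) := by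
  classical
  rw [Asum_def, Asum_def, ← Finset.sum_filter]
  congr 1
  ext n
  simp only [Finset.mem_filter, Fintype.mem_piFinset, Finset.mem_Ioc]
  have hfl : (⌊s⌋ : ℤ) ≤ ⌊N i₀⌋ := Int.floor_le_floor hs.2
  constructor
  · rintro ⟨hmem, hle⟩ i
    by_cases hJ : i ∈ J
    · have h2 := hmem i
      simp only [dif_pos hJ] at h2
      simp only [dif_pos (Finset.mem_insert_of_mem hJ), glueFn, dif_pos hJ]
      exact h2
    · by_cases hi0 : i = i₀
      · subst hi0
        have h2 := hmem i
        simp only [dif_neg hJ] at h2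
        simp only [dif_pos (Finset.mem_insert_self i J), glueFn, dif_neg hJ]
        exact ⟨h2.1, hle⟩
      · have h2 := hmem i
        simp only [dif_neg hJ] at h2
        have : i ∉ insert i₀ J := by
          simp only [Finset.mem_insert]; tauto
        simp only [dif_neg this]
        exact h2
  · intro hmem
    constructor
    · intro i
      by_cases hJ : i ∈ J
      · have h2 := hmem i
        simp only [dif_pos (Finset.mem_insert_of_mem hJ), glueFn, dif_pos hJ] at h2
        simp only [dif_pos hJ]
        exact h2
      · by_cases hi0 : i = i₀
        · subst hi0
          have h2 := hmem i
          simp only [dif_pos (Finset.mem_insert_self i J), glueFn, dif_neg hJ] at h2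
          simp only [dif_neg hJ]
          exact ⟨h2.1, le_trans h2.2 hfl⟩
        · have h2 := hmem i
          have hni : i ∉ insert i₀ J := by
            simp only [Finset.mem_insert]; tauto
          simp only [dif_neg hni] at h2
          simp only [dif_neg hJ]
          exact h2
    · have h2 := hmem i₀
      simp only [dif_pos (Finset.mem_insert_self i₀ J), glueFn, dif_neg hi] at h2
      exact h2.2

lemma step_integral (N : Fin k → ℝ) (a : (Fin k → ℤ) → ℂ) {i₀ : Fin k} {J : Finset (Fin k)}
    (hi : i₀ ∉ J) :
    (∫ s in Set.Ioc (0:ℝ) (N i₀),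
      (∫ t in Set.univ.pi fun j : {i // i ∈ J} => Set.Ioc (0:ℝ) (N j.1),
        ‖Asum N (fun n => if n i₀ ≤ ⌊s⌋ then a n else 0) J t‖))
    = ∫ u in Set.univ.pi fun j : {i // i ∈ insert i₀ J} => Set.Ioc (0:ℝ) (N j.1),
        ‖Asum N a (insert i₀ J) u‖ := by
  classical
  have hresJ := pi_restrict (fun j : {i // i ∈ J} => Set.Ioc (0:ℝ) (N j.1))
    (fun j => measurableSet_Ioc)
  have hresI := pi_restrict (fun j : {i // i ∈ insert i₀ J} => Set.Ioc (0:ℝ) (N j.1))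
    (fun j => measurableSet_Ioc)
  have hFmeas : Measurable fun u => ‖Asum N a (insert i₀ J) u‖ :=
    continuous_norm.measurable.comp (measurable_Asum N a (insert i₀ J))
  have hIF : Integrable (fun u => ‖Asum N a (insert i₀ J) u‖)
      (Measure.pi fun j : {i // i ∈ insert i₀ J} =>
        (volume : Measure ℝ).restrict (Set.Ioc 0 (N j.1))) := by
    rw [hresI]
    exact integrableOn_abs_Asum N a (insert i₀ J)
  have hglue := measurable_glueFn i₀ J
  have hmap := map_glueFn N hi
  have hint : Integrable
      ((fun u => ‖Asum N a (insert i₀ J) u‖) ∘ glueFn i₀ J)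
      ((((volume : Measure ℝ).restrict (Set.Ioc 0 (N i₀))).prod
        (Measure.pi fun j : {i // i ∈ J} => (volume : Measure ℝ).restrict (Set.Ioc 0 (N j.1))))) := by
    refine (integrable_map_measure ?_ hglue.aemeasurable).mp ?_
    · exact hFmeas.aestronglyMeasurable
    · rw [hmap]; exact hIF
  rw [← hresI, ← hmap, integral_map hglue.aemeasurable hFmeas.aestronglyMeasurable,
    integral_prod (fun x : ℝ × ({i // i ∈ J} → ℝ) =>
      ‖Asum N a (insert i₀ J) (glueFn i₀ J x)‖) hint, ← hresJ]
  refine setIntegral_congr_fun measurableSet_Ioc fun s hs => ?_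
  exact integral_congr_ae (Filter.Eventually.of_forall fun t =>
    congrArg norm (Asum_indicator N a hi hs t))

lemma hasDerivAt_update' (x : Fin k → ℝ) (i₀ : Fin k) (s : ℝ) :
    HasDerivAt (fun s : ℝ => Function.update x i₀ s) (Pi.single i₀ 1) s := by
  have hfun : (fun s : ℝ => Function.update x i₀ s)
      = fun s => x + (s - x i₀) • (Pi.single i₀ 1 : Fin k → ℝ) := by
    funext s j
    simp only [Function.update_apply, Pi.add_apply, Pi.smul_apply, Pi.single_apply]
    split_ifs with h
    · subst h; simp
    · simp
  rw [hfun]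
  have h1 : HasDerivAt (fun s : ℝ => (s - x i₀)) 1 s := (hasDerivAt_id s).sub_const (x i₀)
  have h2 := (h1.smul_const (Pi.single i₀ 1 : Fin k → ℝ)).const_add x
  simpa using h2

lemma ftc_coord {n : ℕ} {b : (Fin k → ℝ) → ℂ} (hb : ContDiff ℝ (n + 1 : ℕ) b)
    (i₀ : Fin k) (x : Fin k → ℝ) {z Nv : ℝ} (h0 : 0 < z) (hzN : z ≤ Nv) :
    b (Function.update x i₀ z) = b (Function.update x i₀ Nv)
      - ∫ s in Set.Ioc (0:ℝ) Nv, Set.indicator (Set.Ici z)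
          (fun s => pderivI i₀ b (Function.update x i₀ s)) s := by
  have hdiff : Differentiable ℝ b := hb.differentiable (by simp)
  have hg : ∀ s : ℝ, HasDerivAt (fun s => b (Function.update x i₀ s))
      (pderivI i₀ b (Function.update x i₀ s)) s := fun s =>
    (hdiff _).hasFDerivAt.comp_hasDerivAt s (hasDerivAt_update' x i₀ s)
  have hcont : Continuous fun s => pderivI i₀ b (Function.update x i₀ s) := by
    have h1 : Continuous (pderivI i₀ b) := (contDiff_pderivI i₀ hb).continuous
    exact h1.comp (continuous_const.update i₀ continuous_id)
  have hFTC := intervalIntegral.integral_eq_sub_of_hasDerivAt (fun s _ => hg s)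
    ((hcont.intervalIntegrable z Nv))
  have hIcc : Set.Ioc (0:ℝ) Nv ∩ Set.Ici z = Set.Icc z Nv := by
    ext s
    constructor
    · rintro ⟨⟨_, h2⟩, h3⟩; exact ⟨h3, h2⟩
    · rintro ⟨h1, h2⟩; exact ⟨⟨lt_of_lt_of_le h0 h1, h2⟩, h1⟩
  rw [setIntegral_indicator measurableSet_Ici, hIcc, integral_Icc_eq_integral_Ioc,
    ← intervalIntegral.integral_of_le hzN, hFTC]
  ring

lemma integral_abs_Asum_le (N : Fin k → ℝ) (a' a : (Fin k → ℤ) → ℂ) (J : Finset (Fin k))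
    (hdom : ∀ n, ‖a' n‖ ≤ ‖a n‖) :
    (∫ t in Set.univ.pi (fun j : {i // i ∈ J} => Set.Ioc (0:ℝ) (N j.1)),
        ‖Asum N a' J t‖)
      ≤ (∑ n ∈ Fintype.piFinset (fun i => Finset.Ioc (0:ℤ) ⌊N i⌋), ‖a n‖)
        * (volume (Set.univ.pi (fun j : {i // i ∈ J} => Set.Ioc (0:ℝ) (N j.1)))).toReal := by
  set M : ℝ := ∑ n ∈ Fintype.piFinset (fun i => Finset.Ioc (0:ℤ) ⌊N i⌋), ‖a n‖ with hM
  have hbox : MeasurableSet (Set.univ.pi fun j : {i // i ∈ J} => Set.Ioc (0:ℝ) (N j.1)) :=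
    MeasurableSet.univ_pi fun j => measurableSet_Ioc
  have hfin : volume (Set.univ.pi fun j : {i // i ∈ J} => Set.Ioc (0:ℝ) (N j.1)) < ⊤ := by
    rw [volume_pi_pi]
    exact ENNReal.prod_lt_top fun j _ => by simp [Real.volume_Ioc]
  have hb1 : ∀ t ∈ (Set.univ.pi fun j : {i // i ∈ J} => Set.Ioc (0:ℝ) (N j.1)),
      ‖Asum N a' J t‖ ≤ M := by
    intro t ht
    refine le_trans (abs_Asum_le N a' J ht) ?_
    exact Finset.sum_le_sum fun n _ => hdom n
  calc (∫ t in Set.univ.pi (fun j : {i // i ∈ J} => Set.Ioc (0:ℝ) (N j.1)),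
        ‖Asum N a' J t‖)
      ≤ ∫ _t in Set.univ.pi (fun j : {i // i ∈ J} => Set.Ioc (0:ℝ) (N j.1)), M := by
        refine setIntegral_mono_on (integrableOn_abs_Asum N a' J) ?_ hbox hb1
        exact integrableOn_const hfin.ne
    _ = M * (volume (Set.univ.pi (fun j : {i // i ∈ J} => Set.Ioc (0:ℝ) (N j.1)))).toReal := by
        rw [setIntegral_const, smul_eq_mul, mul_comm]; rfl


theorem key_ineq (N B : Fin k → ℝ) (hN : ∀ i, 0 < N i) (hB : ∀ i, 0 < B i)
    (T : Finset (Fin k)) :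
    ∀ (a : (Fin k → ℤ) → ℂ) (b : (Fin k → ℝ) → ℂ) (c : Fin k → ℝ) (C : ℝ),
      ContDiff ℝ (T.card : ℕ) b →
      (∀ i, 0 < c i ∧ c i ≤ N i) →
      (∀ S : Finset (Fin k), S ⊆ T → ∀ x : Fin k → ℝ, (∀ i, 0 < x i ∧ x i ≤ N i) →
        ‖mixedPartial S b x‖ ≤ C * ∏ j ∈ S, B j) →
      ‖∑ n ∈ Fintype.piFinset (fun i => Finset.Ioc (0:ℤ) ⌊N i⌋),
          a n * b (fun i => if i ∈ T then (n i : ℝ) else c i)‖ ≤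
        C * ∑ J ∈ T.powerset, (∏ j ∈ J, B j) *
          ∫ t in Set.univ.pi (fun j : {i // i ∈ J} => Set.Ioc (0:ℝ) (N j.1)),
            ‖Asum N a J t‖ := by
  induction T using Finset.induction_on_max with
  | empty =>
    intro a b c C hb hc hbd
    have hmp : mixedPartial ∅ b = b := by
      simp [mixedPartial, Finset.sort_empty]
    have hbc : ‖b c‖ ≤ C := by
      have := hbd ∅ (Finset.Subset.refl _) c hc
      simpa [hmp] using this
    haveI hE : IsEmpty {i // i ∈ (∅ : Finset (Fin k))} :=
      ⟨fun j => absurd j.2 (Finset.notMem_empty _)⟩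
    simp only [Finset.notMem_empty, if_false]
    rw [← Finset.sum_mul, norm_mul]
    rw [Finset.powerset_empty, Finset.sum_singleton, Finset.prod_empty, one_mul]
    have huniv : (Set.univ.pi fun j : {i // i ∈ (∅ : Finset (Fin k))} => Set.Ioc (0:ℝ) (N j.1))
        = Set.univ := by
      ext t; simp only [Set.mem_pi, Set.mem_univ, iff_true]
      intro j _; exact absurd j.2 (Finset.notMem_empty _)
    rw [huniv, Measure.restrict_univ]
    rw [show (volume : Measure ({i // i ∈ (∅ : Finset (Fin k))} → ℝ))
        = Measure.dirac (fun j => isEmptyElim j) from by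
      rw [volume_pi]; exact Measure.pi_of_empty _, integral_dirac]
    have hAs : ∀ t, Asum N a (∅ : Finset (Fin k)) t
        = ∑ n ∈ Fintype.piFinset (fun i => Finset.Ioc (0:ℤ) ⌊N i⌋), a n := by
      intro t
      rw [Asum_def]
      congr 1
    rw [hAs]
    calc ‖∑ n ∈ Fintype.piFinset (fun i => Finset.Ioc (0:ℤ) ⌊N i⌋), a n‖
          * ‖b c‖
        ≤ ‖∑ n ∈ Fintype.piFinset (fun i => Finset.Ioc (0:ℤ) ⌊N i⌋), a n‖ * C := by
          exact mul_le_mul_of_nonneg_left hbc (norm_nonneg _)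
      _ = C * ‖∑ n ∈ Fintype.piFinset (fun i => Finset.Ioc (0:ℤ) ⌊N i⌋), a n‖ :=
          mul_comm _ _
  | insert i₀ T' hmax IH =>
    intro a b c C hb hc hbd
    classical
    have hi₀ : i₀ ∉ T' := fun h => lt_irrefl i₀ (hmax i₀ h)
    have hcard : (insert i₀ T').card = T'.card + 1 := Finset.card_insert_of_notMem hi₀
    have hb1 : ContDiff ℝ (T'.card + 1 : ℕ) b := by rw [← hcard]; exact hb
    have hbT' : ContDiff ℝ (T'.card : ℕ) b := hb1.of_le (by exact_mod_cast Nat.le_succ _)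
    have hbp : ContDiff ℝ (T'.card : ℕ) (pderivI i₀ b) := contDiff_pderivI i₀ hb1
    have hnfacts : ∀ n ∈ Fintype.piFinset (fun i : Fin k => Finset.Ioc (0:ℤ) ⌊N i⌋),
        (0:ℝ) < ((n : Fin k → ℤ) i₀ : ℝ) ∧ ((n i₀ : ℝ)) ≤ N i₀ := by
      intro n hn
      have h := (Fintype.mem_piFinset.mp hn) i₀
      rw [Finset.mem_Ioc] at h
      constructor
      · exact_mod_cast h.1
      · calc ((n i₀ : ℝ)) ≤ (⌊N i₀⌋ : ℝ) := by exact_mod_cast h.2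
          _ ≤ N i₀ := Int.floor_le _
    have harg1 : ∀ n : Fin k → ℤ,
        (fun i => if i ∈ insert i₀ T' then (n i : ℝ) else c i)
          = Function.update (fun i => if i ∈ T' then (n i:ℝ) else c i) i₀ ((n i₀ : ℝ)) := by
      intro n; funext i
      rw [Function.update_apply]
      by_cases h1 : i = i₀
      · subst h1; simp
      · simp [Finset.mem_insert, h1]
    have harg2 : ∀ (n : Fin k → ℤ) (v : ℝ),
        Function.update (fun i => if i ∈ T' then (n i:ℝ) else c i) i₀ v
          = fun i => if i ∈ T' then (n i : ℝ) else Function.update c i₀ v i := by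
      intro n v; funext i
      rw [Function.update_apply, Function.update_apply]
      by_cases h1 : i = i₀
      · subst h1; simp [hi₀]
      · simp [h1]
    have hsplit : ∀ n ∈ Fintype.piFinset (fun i : Fin k => Finset.Ioc (0:ℤ) ⌊N i⌋),
        a n * b (fun i => if i ∈ insert i₀ T' then (n i : ℝ) else c i)
          = a n * b (Function.update (fun i => if i ∈ T' then (n i:ℝ) else c i) i₀ (N i₀))
            - ∫ s in Set.Ioc (0:ℝ) (N i₀), Set.indicator (Set.Ici ((n i₀:ℝ)))
                (fun s => a n * pderivI i₀ b
                  (Function.update (fun i => if i ∈ T' then (n i:ℝ) else c i) i₀ s)) s := by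
      intro n hn
      rw [harg1 n, ftc_coord hb1 i₀ _ (hnfacts n hn).1 (hnfacts n hn).2, mul_sub]
      congr 1
      rw [← integral_const_mul]
      congr 1
      funext s
      simp only [Set.indicator_apply, mul_ite, mul_zero]
    have hintegr : ∀ n ∈ Fintype.piFinset (fun i : Fin k => Finset.Ioc (0:ℤ) ⌊N i⌋),
        Integrable (fun s => Set.indicator (Set.Ici ((n i₀:ℝ)))
          (fun s => a n * pderivI i₀ b
            (Function.update (fun i => if i ∈ T' then (n i:ℝ) else c i) i₀ s)) s)
          (volume.restrict (Set.Ioc (0:ℝ) (N i₀))) := by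
      intro n hn
      refine Integrable.indicator ?_ measurableSet_Ici
      have hcont : Continuous fun s => a n * pderivI i₀ b
          (Function.update (fun i => if i ∈ T' then (n i:ℝ) else c i) i₀ s) :=
        continuous_const.mul ((hbp.continuous).comp (continuous_const.update i₀ continuous_id))
      exact hcont.integrableOn_Ioc
    rw [Finset.sum_congr rfl hsplit, Finset.sum_sub_distrib, ← integral_finset_sum _ hintegr]
    have htri : ∀ X Y : ℂ, ‖X - Y‖ ≤ ‖X‖ + ‖Y‖ := by
      intro X Y
      simpa using norm_sub_le X Y
    refine le_trans (htri _ _) ?_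
    -- Term 1 bound
    have hc₁ : ∀ i, 0 < Function.update c i₀ (N i₀) i ∧ Function.update c i₀ (N i₀) i ≤ N i := by
      intro i
      rw [Function.update_apply]
      split_ifs with h
      · subst h; exact ⟨hN i, le_refl _⟩
      · exact hc i
    have hT1 : ‖∑ n ∈ Fintype.piFinset (fun i : Fin k => Finset.Ioc (0:ℤ) ⌊N i⌋),
        a n * b (Function.update (fun i => if i ∈ T' then (n i:ℝ) else c i) i₀ (N i₀))‖
        ≤ C * ∑ J ∈ T'.powerset, (∏ j ∈ J, B j) *
          ∫ t in Set.univ.pi (fun j : {i // i ∈ J} => Set.Ioc (0:ℝ) (N j.1)),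
            ‖Asum N a J t‖ := by
      have hrw : (∑ n ∈ Fintype.piFinset (fun i : Fin k => Finset.Ioc (0:ℤ) ⌊N i⌋),
          a n * b (Function.update (fun i => if i ∈ T' then (n i:ℝ) else c i) i₀ (N i₀)))
          = ∑ n ∈ Fintype.piFinset (fun i : Fin k => Finset.Ioc (0:ℤ) ⌊N i⌋),
          a n * b (fun i => if i ∈ T' then (n i:ℝ) else Function.update c i₀ (N i₀) i) :=
        Finset.sum_congr rfl fun n _ => by rw [harg2 n (N i₀)]
      rw [hrw]
      exact IH a b (Function.update c i₀ (N i₀)) C hbT' hc₁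
        (fun S hS x hx => hbd S (hS.trans (Finset.subset_insert i₀ T')) x hx)
    -- Term 2 bound
    have hHint : Integrable (fun s => ∑ n ∈ Fintype.piFinset (fun i : Fin k => Finset.Ioc (0:ℤ) ⌊N i⌋),
        Set.indicator (Set.Ici ((n i₀:ℝ)))
          (fun s => a n * pderivI i₀ b
            (Function.update (fun i => if i ∈ T' then (n i:ℝ) else c i) i₀ s)) s)
        (volume.restrict (Set.Ioc (0:ℝ) (N i₀))) := integrable_finset_sum _ hintegr
    have hHrw : ∀ s ∈ Set.Ioc (0:ℝ) (N i₀),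
        (∑ n ∈ Fintype.piFinset (fun i : Fin k => Finset.Ioc (0:ℤ) ⌊N i⌋),
          Set.indicator (Set.Ici ((n i₀:ℝ)))
            (fun s => a n * pderivI i₀ b
              (Function.update (fun i => if i ∈ T' then (n i:ℝ) else c i) i₀ s)) s)
        = ∑ n ∈ Fintype.piFinset (fun i : Fin k => Finset.Ioc (0:ℤ) ⌊N i⌋),
            (if n i₀ ≤ ⌊s⌋ then a n else 0) * pderivI i₀ b
              (fun i => if i ∈ T' then (n i:ℝ) else Function.update c i₀ s i) := by
      intro s _
      refine Finset.sum_congr rfl fun n _ => ?_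
      rw [Set.indicator_apply, harg2 n s, ite_mul, zero_mul]
      simp only [Set.mem_Ici]
      by_cases hcond : (n i₀ : ℝ) ≤ s
      · rw [if_pos hcond, if_pos (Int.le_floor.mpr hcond)]
      · rw [if_neg hcond, if_neg (fun hcc => hcond (Int.le_floor.mp hcc))]
    have hc₂ : ∀ s ∈ Set.Ioc (0:ℝ) (N i₀), ∀ i,
        0 < Function.update c i₀ s i ∧ Function.update c i₀ s i ≤ N i := by
      intro s hs i
      rw [Function.update_apply]
      split_ifs with h
      · subst h; exact ⟨hs.1, hs.2⟩
      · exact hc i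
    have hbd₂ : ∀ S : Finset (Fin k), S ⊆ T' → ∀ x : Fin k → ℝ,
        (∀ i, 0 < x i ∧ x i ≤ N i) →
        ‖mixedPartial S (pderivI i₀ b) x‖ ≤ (C * B i₀) * ∏ j ∈ S, B j := by
      intro S hS x hx
      rw [← mixedPartial_insert (fun y hy => hmax y (hS hy)) b]
      refine le_trans (hbd (insert i₀ S) (Finset.insert_subset_insert i₀ hS) x hx) ?_
      rw [Finset.prod_insert (fun h => hi₀ (hS h))]
      ring_nf
      exact le_refl _
    have hpt : ∀ s ∈ Set.Ioc (0:ℝ) (N i₀),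
        ‖(∑ n ∈ Fintype.piFinset (fun i : Fin k => Finset.Ioc (0:ℤ) ⌊N i⌋),
          Set.indicator (Set.Ici ((n i₀:ℝ)))
            (fun s => a n * pderivI i₀ b
              (Function.update (fun i => if i ∈ T' then (n i:ℝ) else c i) i₀ s)) s)‖
        ≤ (C * B i₀) * ∑ J ∈ T'.powerset, (∏ j ∈ J, B j) *
            ∫ t in Set.univ.pi (fun j : {i // i ∈ J} => Set.Ioc (0:ℝ) (N j.1)),
              ‖Asum N (fun n => if n i₀ ≤ ⌊s⌋ then a n else 0) J t‖ := by
      intro s hs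
      rw [hHrw s hs]
      exact IH (fun n => if n i₀ ≤ ⌊s⌋ then a n else 0) (pderivI i₀ b)
        (Function.update c i₀ s) (C * B i₀) hbp (hc₂ s hs) hbd₂
    have hIJint : ∀ J : Finset (Fin k), IntegrableOn (fun s : ℝ =>
        ∫ t in Set.univ.pi (fun j : {i // i ∈ J} => Set.Ioc (0:ℝ) (N j.1)),
          ‖Asum N (fun n => if n i₀ ≤ ⌊s⌋ then a n else 0) J t‖)
        (Set.Ioc (0:ℝ) (N i₀)) volume := by
      intro J
      have hmeas : Measurable (fun s : ℝ =>
          ∫ t in Set.univ.pi (fun j : {i // i ∈ J} => Set.Ioc (0:ℝ) (N j.1)),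
            ‖Asum N (fun n => if n i₀ ≤ ⌊s⌋ then a n else 0) J t‖) := by
        have : (fun s : ℝ =>
            ∫ t in Set.univ.pi (fun j : {i // i ∈ J} => Set.Ioc (0:ℝ) (N j.1)),
              ‖Asum N (fun n => if n i₀ ≤ ⌊s⌋ then a n else 0) J t‖)
            = (fun m : ℤ =>
              ∫ t in Set.univ.pi (fun j : {i // i ∈ J} => Set.Ioc (0:ℝ) (N j.1)),
                ‖Asum N (fun n => if n i₀ ≤ m then a n else 0) J t‖) ∘ Int.floor :=
          rfl
        rw [this]
        exact (measurable_of_countable _).comp Int.measurable_floor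
      refine Integrable.mono' (g := fun _ =>
        (∑ n ∈ Fintype.piFinset (fun i => Finset.Ioc (0:ℤ) ⌊N i⌋), ‖a n‖)
          * (volume (Set.univ.pi (fun j : {i // i ∈ J} => Set.Ioc (0:ℝ) (N j.1)))).toReal)
        (integrable_const _) hmeas.aestronglyMeasurable.restrict
        (Filter.Eventually.of_forall fun s => ?_)
      rw [Real.norm_eq_abs, abs_of_nonneg (integral_nonneg fun t => norm_nonneg _)]
      refine integral_abs_Asum_le N _ a J fun n => ?_
      by_cases h : n i₀ ≤ ⌊s⌋ <;> simp [h]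
    have hGint : IntegrableOn (fun s : ℝ => (C * B i₀) * ∑ J ∈ T'.powerset, (∏ j ∈ J, B j) *
        ∫ t in Set.univ.pi (fun j : {i // i ∈ J} => Set.Ioc (0:ℝ) (N j.1)),
          ‖Asum N (fun n => if n i₀ ≤ ⌊s⌋ then a n else 0) J t‖)
        (Set.Ioc (0:ℝ) (N i₀)) volume := by
      refine Integrable.const_mul ?_ _
      exact integrable_finset_sum _ fun J _ => ((hIJint J).const_mul _)
    have hT2 : ‖∫ s in Set.Ioc (0:ℝ) (N i₀),
        ∑ n ∈ Fintype.piFinset (fun i : Fin k => Finset.Ioc (0:ℤ) ⌊N i⌋),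
          Set.indicator (Set.Ici ((n i₀:ℝ)))
            (fun s => a n * pderivI i₀ b
              (Function.update (fun i => if i ∈ T' then (n i:ℝ) else c i) i₀ s)) s‖
        ≤ C * ∑ J ∈ T'.powerset, (B i₀ * ∏ j ∈ J, B j) *
            ∫ u in Set.univ.pi (fun j : {i // i ∈ insert i₀ J} => Set.Ioc (0:ℝ) (N j.1)),
              ‖Asum N a (insert i₀ J) u‖ := by
      refine le_trans (norm_integral_le_integral_norm _) ?_
      refine le_trans (setIntegral_mono_on hHint.norm hGint measurableSet_Ioc hpt) ?_
      have heq : (∫ s in Set.Ioc (0:ℝ) (N i₀), (C * B i₀) * ∑ J ∈ T'.powerset, (∏ j ∈ J, B j) *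
          ∫ t in Set.univ.pi (fun j : {i // i ∈ J} => Set.Ioc (0:ℝ) (N j.1)),
            ‖Asum N (fun n => if n i₀ ≤ ⌊s⌋ then a n else 0) J t‖)
          = (C * B i₀) * ∑ J ∈ T'.powerset, (∏ j ∈ J, B j) *
            ∫ u in Set.univ.pi (fun j : {i // i ∈ insert i₀ J} => Set.Ioc (0:ℝ) (N j.1)),
              ‖Asum N a (insert i₀ J) u‖ := by
        rw [integral_const_mul]
        congr 1
        rw [integral_finset_sum _ (fun J _ => ((hIJint J).const_mul _))]
        refine Finset.sum_congr rfl fun J hJ => ?_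
        rw [integral_const_mul]
        congr 1
        exact step_integral N a (fun h => hi₀ (Finset.mem_powerset.mp hJ h))
      rw [heq, Finset.mul_sum, Finset.mul_sum]
      refine le_of_eq (Finset.sum_congr rfl fun J hJ => by ring)
    refine le_trans (add_le_add hT1 hT2) ?_
    rw [Finset.sum_powerset_insert hi₀, mul_add]
    refine add_le_add (le_refl _) (le_of_eq ?_)
    rw [Finset.mul_sum, Finset.mul_sum]
    refine Finset.sum_congr rfl fun J hJ => ?_
    rw [Finset.prod_insert (fun h => hi₀ (Finset.mem_powerset.mp hJ h))]


theorem stmt_10 (k : ℕ) (hk : 0 < k) (N : Fin k → ℝ) (hN : ∀ i, 0 < N i)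
    (a : (Fin k → ℤ) → ℂ) (b : (Fin k → ℝ) → ℂ)
    (B : Fin k → ℝ) (hB : ∀ i, 0 < B i)
    (hb : ContDiff ℝ k b)
    (hbd : ∀ S : Finset (Fin k), ∀ x : Fin k → ℝ, (∀ i, 0 < x i ∧ x i ≤ N i) →
      ‖mixedPartial S b x‖ ≤ ∏ j ∈ S, B j) :
    ‖∑ n ∈ Fintype.piFinset (fun i => Finset.Ioc (0 : ℤ) ⌊N i⌋),
        a n * b (fun i => (n i : ℝ))‖ ≤
      ∑ J : Finset (Fin k), (∏ j ∈ J, B j) *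
        ∫ t in Set.univ.pi (fun j : {i // i ∈ J} => Set.Ioc (0 : ℝ) (N j.1)),
          ‖∑ n ∈ Fintype.piFinset
            (fun i => Finset.Ioc (0 : ℤ) (if h : i ∈ J then ⌊t ⟨i, h⟩⌋ else ⌊N i⌋)), a n‖ := by
  have hcard : (Finset.univ : Finset (Fin k)).card = k := by simp
  have hb' : ContDiff ℝ ((Finset.univ : Finset (Fin k)).card : ℕ) b := by
    rw [hcard]; exact hb
  have h := key_ineq N B hN hB Finset.univ a b N 1 hb' (fun i => ⟨hN i, le_refl _⟩)
    (fun S _ x hx => by rw [one_mul]; exact hbd S x hx)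
  rw [Finset.powerset_univ, one_mul] at h
  simp only [Finset.mem_univ, if_true] at h
  simp only [Asum_def] at h
  exact h
end

section
/- Let q be a prime and χ a Dirichlet character modulo q of order Δ > 1. Let r ≥ 1 be an integer, let u be a real number with u ≤ q, and let z = (z_1,…,z_{2r}) be a tuple of integers with 0 < z_j ≤ u for each j. Set δ(j) = 1 if j is even and δ(j) = Δ − 1 if j is odd. If the polynomial ∏_{j=1}^{2r}(X + z_j)^{δ(j)}, regarded as a polynomial over 𝔽_q, is a perfect Δ-th power over an algebraic closure of 𝔽_q (equivalently, the multiplicity of each of its roots is divisible by Δ), then z is bad, i.e., for every j ∈ {1,…,2r} there exists ℓ ≠ j with z_ℓ = z_j. -/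
open scoped BigOperators
open Polynomial

lemma rm_prod {R : Type*} [CommRing R] [IsDomain R] {ι : Type*} (s : Finset ι)
    (f : ι → R[X]) (hf : ∀ i ∈ s, f i ≠ 0) (x : R) :
    (∏ i ∈ s, f i).rootMultiplicity x = ∑ i ∈ s, (f i).rootMultiplicity x := by
  classical
  induction s using Finset.cons_induction with
  | empty => simp
  | cons a s ha ih =>
      rw [Finset.prod_cons, Finset.sum_cons,
        Polynomial.rootMultiplicity_mul, ih (fun i hi => hf i (Finset.mem_cons_of_mem hi))]
      exact mul_ne_zero (hf a (Finset.mem_cons_self a s))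
        (Finset.prod_ne_zero_iff.2 fun i hi => hf i (Finset.mem_cons_of_mem hi))

theorem stmt_17 (q : ℕ) [Fact q.Prime] (χ : DirichletCharacter ℂ q)
    (hχ : 1 < orderOf χ) (r : ℕ) (hr : 1 ≤ r) (u : ℝ) (hu : u ≤ (q : ℝ))
    (z : Fin (2 * r) → ℤ) (hz : ∀ j, 0 < z j ∧ (z j : ℝ) ≤ u)
    (hpow : ∃ g : Polynomial (AlgebraicClosure (ZMod q)),
      Polynomial.map (algebraMap (ZMod q) (AlgebraicClosure (ZMod q)))
          (∏ j : Fin (2 * r),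
            (Polynomial.X + Polynomial.C ((z j : ZMod q))) ^
              (if Even ((j : ℕ) + 1) then 1 else orderOf χ - 1)) =
        g ^ (orderOf χ)) :
    ∀ j, ∃ ℓ, ℓ ≠ j ∧ z ℓ = z j := by
  classical
  obtain ⟨g, hg⟩ := hpow
  set Δ := orderOf χ with hΔ
  set K := AlgebraicClosure (ZMod q)
  set φ := algebraMap (ZMod q) K
  set δ : Fin (2 * r) → ℕ := fun j => if Even ((j : ℕ) + 1) then 1 else Δ - 1 with hδ
  intro j
  by_contra h
  push_neg at h
  -- z bounds: 0 < z ℓ ≤ q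
  have hzq : ∀ ℓ, 0 < z ℓ ∧ z ℓ ≤ (q : ℤ) := fun ℓ =>
    ⟨(hz ℓ).1, by exact_mod_cast (hz ℓ).2.trans hu⟩
  -- injectivity of reduction
  have hinj : ∀ ℓ, ((z ℓ : ZMod q) = (z j : ZMod q)) ↔ z ℓ = z j := by
    intro ℓ
    constructor
    · intro hmod
      have hdvd : (q : ℤ) ∣ z ℓ - z j := ((ZMod.intCast_eq_intCast_iff _ _ _).1 hmod).symm.dvd
      have habs : |z ℓ - z j| < (q : ℤ) := by
        have h1 := (hzq ℓ).1; have h2 := (hzq ℓ).2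
        have h3 := (hzq j).1; have h4 := (hzq j).2
        rw [abs_lt]; omega
      have := Int.eq_zero_of_abs_lt_dvd hdvd habs
      omega
    · intro he; rw [he]
  -- the mapped polynomial
  have hφinj : Function.Injective φ := (algebraMap (ZMod q) K).injective
  set α : K := -φ ((z j : ZMod q)) with hα
  have hmap : Polynomial.map φ
      (∏ ℓ : Fin (2 * r), (X + C ((z ℓ : ZMod q))) ^ δ ℓ) =
      ∏ ℓ : Fin (2 * r), (X - C (-φ ((z ℓ : ZMod q)))) ^ δ ℓ := by
    rw [Polynomial.map_prod]
    congr 1; ext ℓ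
    rw [Polynomial.map_pow, Polynomial.map_add, Polynomial.map_X, Polynomial.map_C,
      map_neg, sub_neg_eq_add]
  have hfac_ne : ∀ ℓ : Fin (2 * r), (X - C (-φ ((z ℓ : ZMod q)))) ^ δ ℓ ≠ 0 :=
    fun ℓ => pow_ne_zero _ (X_sub_C_ne_zero _)
  -- root multiplicity of LHS at α
  have hδpos : ∀ ℓ, 0 < δ ℓ := by
    intro ℓ; simp only [hδ]; split <;> omega
  have hδlt : ∀ ℓ, δ ℓ < Δ ∨ δ ℓ = Δ - 1 ∧ 1 < Δ := by
    intro ℓ; simp only [hδ]; split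
    · left; omega
    · right; exact ⟨rfl, hχ⟩
  have hrmL : Polynomial.rootMultiplicity α
      (∏ ℓ : Fin (2 * r), (X - C (-φ ((z ℓ : ZMod q)))) ^ δ ℓ) = δ j := by
    rw [rm_prod _ _ (fun i _ => hfac_ne i)]
    have hterm : ∀ ℓ : Fin (2 * r),
        Polynomial.rootMultiplicity α ((X - C (-φ ((z ℓ : ZMod q)))) ^ δ ℓ) =
        if ℓ = j then δ ℓ else 0 := by
      intro ℓ
      by_cases he : ℓ = j
      · subst he
        simp only [if_pos rfl, ← hα]
        exact Polynomial.rootMultiplicity_X_sub_C_pow _ _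
      · rw [if_neg he]
        have hne : α ≠ -φ ((z ℓ : ZMod q)) := by
          intro hcontra
          exact h ℓ he ((hinj ℓ).1 (hφinj (neg_injective (hα ▸ hcontra)).symm))
        apply Polynomial.rootMultiplicity_eq_zero
        simp only [Polynomial.IsRoot, Polynomial.eval_pow, Polynomial.eval_sub,
          Polynomial.eval_X, Polynomial.eval_C]
        exact pow_ne_zero _ (sub_ne_zero.2 hne)
    rw [Finset.sum_congr rfl (fun ℓ _ => hterm ℓ)]
    simp
  have hP : (∏ ℓ : Fin (2 * r), (X - C (-φ ((z ℓ : ZMod q)))) ^ δ ℓ) = g ^ Δ := by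
    rw [← hmap]; exact hg
  have hdvd : Δ ∣ δ j := by
    have hrm := hrmL
    rw [hP, ← Polynomial.count_roots, Polynomial.roots_pow, Multiset.count_nsmul,
      Polynomial.count_roots] at hrm
    exact ⟨_, hrm.symm⟩
  have h1 := Nat.le_of_dvd (hδpos j) hdvd
  have h2 : δ j < Δ := by simp only [hδ]; split <;> omega
  omega
end

section
/- Fix integers r ≥ 1 and k ≥ 1, a subset S ⊆ {1,…,k}, and a tuple τ = (τ_1,…,τ_k) of positive real numbers. Then the number of elements of B(S;τ) satisfies #B(S;τ) ≤ r^{k(2r+1)} · (∏_{i∈S} τ_i^{r}) · (∏_{i∉S} τ_i^{2r}). -/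
open scoped BigOperators

/-- A `2r`-tuple of integers is *bad* if each of its values is attained at least twice. -/
def IsBadTuple {n : ℕ} (z : Fin n → ℤ) : Prop :=
  ∀ j, ∃ ℓ, ℓ ≠ j ∧ z ℓ = z j

lemma bad_image_card_le {r : ℕ} (z : Fin (2*r) → ℤ) (hz : IsBadTuple z) :
    (Finset.image z Finset.univ).card ≤ r := by
  classical
  have h := Finset.card_eq_sum_card_fiberwise
    (f := z) (s := Finset.univ) (t := Finset.image z Finset.univ)
    (fun x _ => Finset.mem_image_of_mem z (Finset.mem_univ x))
  have h2 : ∀ b ∈ Finset.image z Finset.univ,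
      2 ≤ (Finset.univ.filter (fun x => z x = b)).card := by
    intro b hb
    obtain ⟨j, -, rfl⟩ := Finset.mem_image.mp hb
    obtain ⟨ℓ, hℓ, hzℓ⟩ := hz j
    refine Finset.one_lt_card.mpr ⟨ℓ, ?_, j, ?_, hℓ⟩ <;> simp [hzℓ]
  have h3 := Finset.sum_le_sum h2
  simp only [Finset.sum_const, smul_eq_mul] at h3
  have h4 : (Finset.univ : Finset (Fin (2*r))).card = 2*r := by simp
  omega

lemma encode_bad {r : ℕ} (hr : 1 ≤ r) {M : ℤ} (z : Fin (2*r) → ℤ) (hz : IsBadTuple z)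
    (hmem : ∀ j, z j ∈ Finset.Icc 1 M) :
    ∃ (f : Fin (2*r) → Fin r) (v : Fin r → {x // x ∈ Finset.Icc (1:ℤ) M}),
      ∀ j, (v (f j)).1 = z j := by
  classical
  have hM : (1:ℤ) ≤ M := by
    have := hmem ⟨0, by omega⟩
    simp [Finset.mem_Icc] at this; omega
  set T : Finset ℤ := Finset.image z Finset.univ with hT
  have hcard : T.card ≤ r := bad_image_card_le z hz
  let e : T ≃ Fin T.card := T.equivFin
  have hmemT : ∀ j, z j ∈ T := fun j => Finset.mem_image_of_mem z (Finset.mem_univ j)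
  have hsub : ∀ x ∈ T, x ∈ Finset.Icc (1:ℤ) M := by
    intro x hx
    obtain ⟨j, -, rfl⟩ := Finset.mem_image.mp hx
    exact hmem j
  refine ⟨fun j => Fin.castLE hcard (e ⟨z j, hmemT j⟩),
    fun m => if h : (m : ℕ) < T.card then
        ⟨(e.symm ⟨(m : ℕ), h⟩).1, hsub _ (e.symm ⟨(m : ℕ), h⟩).2⟩
      else ⟨1, Finset.mem_Icc.mpr ⟨le_refl 1, hM⟩⟩, ?_⟩
  intro j
  have hlt : ((Fin.castLE hcard (e ⟨z j, hmemT j⟩) : Fin r) : ℕ) < T.card := by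
    simp
  show (dite _ _ _ : {x // x ∈ Finset.Icc (1:ℤ) M}).1 = z j
  rw [dif_pos hlt]
  have : (⟨((Fin.castLE hcard (e ⟨z j, hmemT j⟩) : Fin r) : ℕ), hlt⟩ : Fin T.card)
      = e ⟨z j, hmemT j⟩ := by
    ext; simp
  rw [this, Equiv.symm_apply_apply]

set_option maxHeartbeats 1000000 in
set_option synthInstance.maxHeartbeats 400000 in
theorem stmt_18 (r k : ℕ) (hr : 1 ≤ r) (hk : 1 ≤ k)
    (S : Finset (Fin k)) (τ : Fin k → ℝ) (hτ : ∀ i, 0 < τ i) :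
    (Set.ncard {z : Fin k → Fin (2 * r) → ℤ |
        (∀ i j, 0 < z i j ∧ (z i j : ℝ) ≤ τ i) ∧
        (∀ i ∈ S, IsBadTuple (z i)) ∧ (∀ i ∉ S, ¬ IsBadTuple (z i))} : ℝ) ≤
      (r : ℝ) ^ (k * (2 * r + 1)) * (∏ i ∈ S, τ i ^ r) * ∏ i ∈ Sᶜ, τ i ^ (2 * r) := by
  classical
  set s := {z : Fin k → Fin (2 * r) → ℤ |
        (∀ i j, 0 < z i j ∧ (z i j : ℝ) ≤ τ i) ∧
        (∀ i ∈ S, IsBadTuple (z i)) ∧ (∀ i ∉ S, ¬ IsBadTuple (z i))} with hs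
  set m : Fin k → ℕ := fun i => if i ∈ S then r else 2*r with hmdef
  have hmS : ∀ i, i ∈ S → r = m i := fun i h => by simp [hmdef, h]
  have hmSc : ∀ i, i ∉ S → 2*r = m i := fun i h => by simp [hmdef, h]
  let C := (Fin k → Fin (2*r) → Fin r) ×
    ((i : Fin k) → Fin (m i) → {x // x ∈ Finset.Icc (1:ℤ) ⌊τ i⌋})
  let g : C → (Fin k → Fin (2*r) → ℤ) := fun c i j =>
    if h : i ∈ S then (c.2 i (Fin.cast (hmS i h) (c.1 i j))).1
    else (c.2 i (Fin.cast (hmSc i h) j)).1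
  have hsub : s ⊆ Set.range g := by
    intro z hz
    obtain ⟨h1, h2, h3⟩ := hz
    have hmem : ∀ i j, z i j ∈ Finset.Icc (1:ℤ) ⌊τ i⌋ := by
      intro i j
      rw [Finset.mem_Icc]
      exact ⟨(h1 i j).1, Int.le_floor.mpr (h1 i j).2⟩
    have hch : ∀ i, ∃ (fi : Fin (2*r) → Fin r)
        (vi : Fin (m i) → {x // x ∈ Finset.Icc (1:ℤ) ⌊τ i⌋}),
        ∀ j, (if h : i ∈ S then (vi (Fin.cast (hmS i h) (fi j))).1
          else (vi (Fin.cast (hmSc i h) j)).1) = z i j := by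
      intro i
      by_cases h : i ∈ S
      · obtain ⟨fi, vi, hfv⟩ := encode_bad hr (z i) (h2 i h) (hmem i)
        refine ⟨fi, fun t => vi (Fin.cast (hmS i h).symm t), ?_⟩
        intro j
        have hcc : ∀ t : Fin r, Fin.cast (hmS i h).symm (Fin.cast (hmS i h) t) = t :=
          fun t => by ext; simp
        simp only [dif_pos h, hcc]
        exact hfv j
      · refine ⟨fun _ => ⟨0, hr⟩,
          fun t => ⟨z i (Fin.cast (hmSc i h).symm t), hmem i _⟩, ?_⟩
        intro j
        have hcc : ∀ t : Fin (2*r), Fin.cast (hmSc i h).symm (Fin.cast (hmSc i h) t) = t :=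
          fun t => by ext; simp
        simp only [dif_neg h, hcc]
    choose f v hfv using hch
    exact ⟨(f, v), funext fun i => funext fun j => hfv i j⟩
  have hfin : (Set.range g).Finite := Set.finite_range g
  have hle1 : s.ncard ≤ (Set.range g).ncard := Set.ncard_le_ncard hsub hfin
  have hle2 : (Set.range g).ncard ≤ Fintype.card C := by
    rw [← Set.image_univ]
    refine le_trans (Set.ncard_image_le Set.finite_univ) ?_
    rw [Set.ncard_univ, Nat.card_eq_fintype_card]
  have hcardC : Fintype.card C = r ^ (2*r*k) * ∏ i, (⌊τ i⌋.toNat) ^ (m i) := by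
    simp [C, Fintype.card_pi, Fintype.card_fun, Int.card_Icc, ← pow_mul]
  have hNt : ∀ i, ((⌊τ i⌋.toNat : ℕ) : ℝ) ≤ τ i := by
    intro i
    have h0 : (0:ℤ) ≤ ⌊τ i⌋ := Int.floor_nonneg.mpr (hτ i).le
    have : ((⌊τ i⌋.toNat : ℤ) : ℝ) = ((⌊τ i⌋ : ℤ) : ℝ) := by
      rw [Int.toNat_of_nonneg h0]
    push_cast at this ⊢
    rw [this]
    exact Int.floor_le (τ i)
  have key : (s.ncard : ℝ) ≤ (r:ℝ) ^ (2*r*k) * ∏ i, ((⌊τ i⌋.toNat : ℕ) : ℝ) ^ (m i) := by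
    calc (s.ncard : ℝ) ≤ (Fintype.card C : ℝ) := by
          exact_mod_cast le_trans hle1 hle2
      _ = (r:ℝ) ^ (2*r*k) * ∏ i, ((⌊τ i⌋.toNat : ℕ) : ℝ) ^ (m i) := by
          rw [hcardC]; push_cast; ring
  have hsplit : ∏ i, ((⌊τ i⌋.toNat : ℕ) : ℝ) ^ (m i)
      = (∏ i ∈ S, ((⌊τ i⌋.toNat : ℕ) : ℝ) ^ r) * ∏ i ∈ Sᶜ, ((⌊τ i⌋.toNat : ℕ) : ℝ) ^ (2*r) := by
    rw [← Finset.prod_mul_prod_compl S]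
    congr 1
    · exact Finset.prod_congr rfl fun i hi => by rw [← hmS i hi]
    · exact Finset.prod_congr rfl fun i hi => by rw [← hmSc i (Finset.mem_compl.mp hi)]
  rw [hsplit] at key
  refine le_trans key ?_
  have hrle : (r:ℝ) ^ (2*r*k) ≤ (r:ℝ) ^ (k*(2*r+1)) := by
    apply pow_le_pow_right₀ (by exact_mod_cast hr)
    nlinarith
  have hA : ∏ i ∈ S, ((⌊τ i⌋.toNat : ℕ) : ℝ) ^ r ≤ ∏ i ∈ S, τ i ^ r :=
    Finset.prod_le_prod (fun i _ => by positivity)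
      (fun i _ => pow_le_pow_left₀ (by positivity) (hNt i) r)
  have hB : ∏ i ∈ Sᶜ, ((⌊τ i⌋.toNat : ℕ) : ℝ) ^ (2*r) ≤ ∏ i ∈ Sᶜ, τ i ^ (2*r) :=
    Finset.prod_le_prod (fun i _ => by positivity)
      (fun i _ => pow_le_pow_left₀ (by positivity) (hNt i) (2*r))
  rw [mul_assoc ((r:ℝ) ^ (k*(2*r+1)))]
  refine mul_le_mul hrle (mul_le_mul hA hB (by positivity)
    (Finset.prod_nonneg fun i _ => pow_nonneg (hτ i).le r)) (by positivity) (by positivity)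
end
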